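/- Let x* ∈ (a,b], ω a non-decreasing nonnegative function, and {f_n} a sequence of BV functions from [a,b] to a metric space X satisfying ω⁻(v_{f_n}, x*, δ) ≤ ω(δ) for 0 < δ ≤ δ_0 and all n, where v_{f_n} is the variation function of f_n. If f^∞ is the pointwise limit of f_n on [a,b], then ω⁻(v_{f^∞}, x*, δ) ≤ ω(δ) for 0 < δ ≤ δ_0. -/
import Mathlib


open Set Filter Topology

/-- Left local modulus of continuity `ω⁻(f,xs,δ)`. -/
noncomputable def omegaMinus {X : Type*} [PseudoEMetricSpace X]
    (f : ℝ → X) (a b xs δ : ℝ) : ENNReal :=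
  ⨆ x ∈ Set.Icc (xs - δ) xs ∩ Set.Icc a b, edist (f x) (f xs)

/-- Let `xs ∈ (a,b]`, `ω` a non-decreasing nonnegative function, and `f n : [a,b] → X`
a sequence of BV functions satisfying `ω⁻(v_{f n}, xs, δ) ≤ ω(δ)` for `0 < δ ≤ δ₀` and
all `n`, where `v_{f n}(x) = V_a^x(f n)` is the variation function. If `g` is the
pointwise limit of `f n` on `[a,b]`, then `ω⁻(v_g, xs, δ) ≤ ω(δ)` for `0 < δ ≤ δ₀`. -/
theorem omegaMinus_variationFunction_pointwise_limit_le
    {X : Type*} [MetricSpace X] (a b δ₀ : ℝ) (hδ₀ : 0 < δ₀)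
    (xs : ℝ) (hxs : xs ∈ Set.Ioc a b)
    (ω : ℝ → ℝ) (hω : Monotone ω) (hωnn : ∀ δ, 0 ≤ ω δ)
    (f : ℕ → ℝ → X) (hbv : ∀ n, BoundedVariationOn (f n) (Set.Icc a b))
    (g : ℝ → X)
    (hb : ∀ n : ℕ, ∀ δ ∈ Set.Ioc (0:ℝ) δ₀,
      omegaMinus (fun x => variationOnFromTo (f n) (Set.Icc a b) a x) a b xs δ
        ≤ ENNReal.ofReal (ω δ))
    (hconv : ∀ x ∈ Set.Icc a b, Tendsto (fun n => f n x) atTop (𝓝 (g x))) :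
    ∀ δ ∈ Set.Ioc (0:ℝ) δ₀,
      omegaMinus (fun x => variationOnFromTo g (Set.Icc a b) a x) a b xs δ
        ≤ ENNReal.ofReal (ω δ) := by

  intro δ hδ
  rw [omegaMinus]
  refine iSup₂_le fun x hx => ?_
  obtain ⟨⟨hx1, hxxs⟩, haxb⟩ := hx
  obtain ⟨hax, hxb⟩ := haxb
  have haxs : a ≤ xs := hxs.1.le
  have habs : a ∈ Set.Icc a b := ⟨le_rfl, hax.trans hxb⟩
  have hxsab : xs ∈ Set.Icc a b := ⟨haxs, hxs.2⟩
  -- Step 1: uniform bound on the variation of `f n` over `Icc a b ∩ Icc x xs`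
  have h1 : ∀ n, eVariationOn (f n) (Set.Icc a b ∩ Set.Icc x xs) ≤ ENNReal.ofReal (ω δ) := by
    intro n
    have hkey := hb n δ hδ
    rw [omegaMinus] at hkey
    have hmem : edist (variationOnFromTo (f n) (Set.Icc a b) a x)
        (variationOnFromTo (f n) (Set.Icc a b) a xs) ≤ ENNReal.ofReal (ω δ) :=
      le_trans (le_iSup₂_of_le x ⟨⟨hx1, hxxs⟩, ⟨hax, hxb⟩⟩ le_rfl) hkey
    have hadd : variationOnFromTo (f n) (Set.Icc a b) a x
          + variationOnFromTo (f n) (Set.Icc a b) x xs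
        = variationOnFromTo (f n) (Set.Icc a b) a xs :=
      variationOnFromTo.add (hbv n).locallyBoundedVariationOn habs ⟨hax, hxb⟩ hxsab
    have hfin : eVariationOn (f n) (Set.Icc a b ∩ Set.Icc x xs) ≠ ⊤ :=
      (hbv n).mono Set.inter_subset_left
    have hnn : 0 ≤ variationOnFromTo (f n) (Set.Icc a b) x xs :=
      variationOnFromTo.nonneg_of_le _ _ hxxs
    calc eVariationOn (f n) (Set.Icc a b ∩ Set.Icc x xs)
        = ENNReal.ofReal (variationOnFromTo (f n) (Set.Icc a b) x xs) := by
          rw [variationOnFromTo.eq_of_le _ _ hxxs, ENNReal.ofReal_toReal hfin]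
      _ = edist (variationOnFromTo (f n) (Set.Icc a b) a x)
            (variationOnFromTo (f n) (Set.Icc a b) a xs) := by
          rw [edist_dist, Real.dist_eq, abs_sub_comm, show
            variationOnFromTo (f n) (Set.Icc a b) a xs
              - variationOnFromTo (f n) (Set.Icc a b) a x
            = variationOnFromTo (f n) (Set.Icc a b) x xs from by linarith [hadd],
            abs_of_nonneg hnn]
      _ ≤ ENNReal.ofReal (ω δ) := hmem
  -- Step 2: lower semicontinuity gives the same bound for `g`
  have h2 : eVariationOn g (Set.Icc a b ∩ Set.Icc x xs) ≤ ENNReal.ofReal (ω δ) := by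
    by_contra hcon
    push_neg at hcon
    have hev := eVariationOn.lowerSemicontinuous_aux
      (F := f) (p := atTop) (f := g) (s := Set.Icc a b ∩ Set.Icc x xs)
      (fun y hy => hconv y hy.1) hcon
    obtain ⟨n, hn⟩ := hev.exists
    exact absurd (h1 n) hn.not_ge
  have hVXfin : eVariationOn g (Set.Icc a b ∩ Set.Icc x xs) ≠ ⊤ :=
    (lt_of_le_of_lt h2 ENNReal.ofReal_lt_top).ne
  -- Step 3: conclude
  by_cases hVA : eVariationOn g (Set.Icc a b ∩ Set.Icc a x) = ⊤
  · have hVB : eVariationOn g (Set.Icc a b ∩ Set.Icc a xs) = ⊤ :=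
      top_le_iff.mp (hVA ▸ eVariationOn.mono g
        (Set.inter_subset_inter_right _ (Set.Icc_subset_Icc_right hxxs)))
    rw [variationOnFromTo.eq_of_le g _ hax, variationOnFromTo.eq_of_le g _ haxs, hVA, hVB]
    simp
  · have hsum := eVariationOn.Icc_add_Icc g hax hxxs (Set.mem_Icc.mpr ⟨hax, hxb⟩)
    have hVBfin : eVariationOn g (Set.Icc a b ∩ Set.Icc a xs) ≠ ⊤ := by
      rw [← hsum]
      exact ENNReal.add_ne_top.mpr ⟨hVA, hVXfin⟩
    rw [variationOnFromTo.eq_of_le g _ hax, variationOnFromTo.eq_of_le g _ haxs,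
      edist_dist, Real.dist_eq]
    have htr : (eVariationOn g (Set.Icc a b ∩ Set.Icc a xs)).toReal
        = (eVariationOn g (Set.Icc a b ∩ Set.Icc a x)).toReal
          + (eVariationOn g (Set.Icc a b ∩ Set.Icc x xs)).toReal := by
      rw [← hsum, ENNReal.toReal_add hVA hVXfin]
    rw [htr]
    rw [show (eVariationOn g (Set.Icc a b ∩ Set.Icc a x)).toReal
        - ((eVariationOn g (Set.Icc a b ∩ Set.Icc a x)).toReal
          + (eVariationOn g (Set.Icc a b ∩ Set.Icc x xs)).toReal)
        = -(eVariationOn g (Set.Icc a b ∩ Set.Icc x xs)).toReal from by ring,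
      abs_neg, abs_of_nonneg ENNReal.toReal_nonneg, ENNReal.ofReal_toReal hVXfin]
    exact h2
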